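/- Let F = Σ_α c_α z^α be a formal power series in n complex variables (c : (multi-indices α ∈ ℕⁿ) → ℂ). If for every v ∈ ℂⁿ the one-variable power series Σ_{k≥0} ( Σ_{|α|=k} c_α v^α ) λ^k has positive radius of convergence, then F is convergent: there exists r > 0 such that Σ_α |c_α| r^{|α|} < ∞. -/

import Mathlib

open Finset

noncomputable section

lemma sum_pow_root (N : ℕ) (hN : 0 < N) (d : ℕ) :
    ∑ j ∈ Finset.range N, (Complex.exp (2 * Real.pi * Complex.I / N)) ^ (j * d)
      = if N ∣ d then (N : ℂ) else 0 := by
  have hprim := Complex.isPrimitiveRoot_exp N hN.ne'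
  set ζ := Complex.exp (2 * Real.pi * Complex.I / N) with hζ
  have hrw : ∀ j, ζ ^ (j * d) = (ζ ^ d) ^ j := fun j => by rw [← pow_mul, Nat.mul_comm]
  simp_rw [hrw]
  by_cases h : N ∣ d
  · rw [if_pos h, (hprim.pow_eq_one_iff_dvd d).2 h]; simp
  · rw [if_neg h]
    have hne : ζ ^ d ≠ 1 := fun hh => h ((hprim.pow_eq_one_iff_dvd d).1 hh)
    rw [geom_sum_eq hne, ← pow_mul, Nat.mul_comm d N, pow_mul,
      (hprim.pow_eq_one_iff_dvd N).2 dvd_rfl]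
    simp

lemma key_identity (n k : ℕ) (c : (Fin n → ℕ) → ℂ) (α : Fin n → ℕ)
    (hα : α ∈ Finset.Nat.antidiagonalTuple n k) (v0 : Fin n → ℂ) (d : ℂ) :
    ∑ j ∈ Fintype.piFinset (fun _ : Fin n => Finset.range (k+1)),
      ((∑ β ∈ Finset.Nat.antidiagonalTuple n k,
          c β * ∏ i, (v0 i + d * Complex.exp (2 * Real.pi * Complex.I / (k+1 : ℕ)) ^ (j i)) ^ (β i))
        * ∏ i, Complex.exp (2 * Real.pi * Complex.I / (k+1 : ℕ)) ^ (j i * ((k+1) - α i)))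
      = ((k+1 : ℕ) : ℂ)^n * (c α * d ^ k) := by
  set N := k + 1 with hNdef
  set ζ := Complex.exp (2 * Real.pi * Complex.I / (N : ℕ)) with hζ
  clear_value N
  have hαk : ∀ i, α i ≤ k := by
    intro i
    rw [Finset.Nat.mem_antidiagonalTuple] at hα
    exact hα ▸ Finset.single_le_sum (fun _ _ => Nat.zero_le _) (Finset.mem_univ i)
  set A : (Fin n → ℕ) → (Fin n → ℕ) → ℂ :=
    fun β t => ∏ i, d ^ (t i) * (v0 i) ^ (β i - t i) * ((β i).choose (t i) : ℂ) with hA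
  have expand : ∀ (j : Fin n → ℕ) (β : Fin n → ℕ),
      (∏ i, (v0 i + d * ζ ^ (j i)) ^ (β i))
      = ∑ t ∈ Fintype.piFinset (fun i => Finset.range (β i + 1)),
          A β t * (∏ i, ζ ^ (j i * t i)) := by
    intro j β
    have h1 : ∀ i : Fin n, (v0 i + d * ζ ^ (j i)) ^ (β i)
        = ∑ s ∈ Finset.range (β i + 1),
            (d ^ s * (v0 i) ^ (β i - s) * ((β i).choose s : ℂ)) * ζ ^ (j i * s) := by
      intro i
      rw [add_comm, add_pow]
      refine Finset.sum_congr rfl fun s _ => ?_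
      rw [mul_pow, pow_mul]
      ring
    rw [Finset.prod_congr rfl fun i _ => h1 i, Finset.prod_univ_sum]
    refine Finset.sum_congr rfl fun t _ => ?_
    rw [Finset.prod_mul_distrib, hA]
  -- main rearrangement
  calc
    ∑ j ∈ Fintype.piFinset (fun _ : Fin n => Finset.range N),
      ((∑ β ∈ Finset.Nat.antidiagonalTuple n k,
          c β * ∏ i, (v0 i + d * ζ ^ (j i)) ^ (β i))
        * ∏ i, ζ ^ (j i * (N - α i)))
      = ∑ β ∈ Finset.Nat.antidiagonalTuple n k,
          ∑ t ∈ Fintype.piFinset (fun i => Finset.range (β i + 1)),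
            (c β * A β t) *
              ∑ j ∈ Fintype.piFinset (fun _ : Fin n => Finset.range N),
                ∏ i, ζ ^ (j i * (t i + (N - α i))) := by
        have step1 : ∀ j : Fin n → ℕ, ((∑ β ∈ Finset.Nat.antidiagonalTuple n k,
              c β * ∏ i, (v0 i + d * ζ ^ (j i)) ^ (β i))
            * ∏ i, ζ ^ (j i * (N - α i)))
          = ∑ β ∈ Finset.Nat.antidiagonalTuple n k,
              ∑ t ∈ Fintype.piFinset (fun i => Finset.range (β i + 1)),
                (c β * A β t) * ∏ i, ζ ^ (j i * (t i + (N - α i))) := by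
          intro j
          rw [Finset.sum_mul]
          refine Finset.sum_congr rfl fun β _ => ?_
          rw [expand, Finset.mul_sum, Finset.sum_mul]
          refine Finset.sum_congr rfl fun t _ => ?_
          have hmm : (∏ i, ζ ^ (j i * t i)) * ∏ i, ζ ^ (j i * (N - α i))
              = ∏ i, ζ ^ (j i * (t i + (N - α i))) := by
            rw [← Finset.prod_mul_distrib]
            refine Finset.prod_congr rfl fun i _ => ?_
            rw [← pow_add, ← Nat.mul_add]
          rw [← hmm]
          ring
        rw [Finset.sum_congr rfl fun j _ => step1 j, Finset.sum_comm]
        refine Finset.sum_congr rfl fun β _ => ?_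
        rw [Finset.sum_comm]
        exact Finset.sum_congr rfl fun t _ => (Finset.mul_sum _ _ _).symm
    _ = ∑ β ∈ Finset.Nat.antidiagonalTuple n k,
          ∑ t ∈ Fintype.piFinset (fun i => Finset.range (β i + 1)),
            (c β * A β t) * (if t = α then ((N : ℂ))^n else 0) := by
        refine Finset.sum_congr rfl fun β hβ => Finset.sum_congr rfl fun t ht => ?_
        congr 1
        have hβk : ∀ i, β i ≤ k := by
          intro i
          rw [Finset.Nat.mem_antidiagonalTuple] at hβ
          exact hβ ▸ Finset.single_le_sum (fun _ _ => Nat.zero_le _) (Finset.mem_univ i)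
        have htk : ∀ i, t i ≤ k := by
          intro i
          have h1 := Fintype.mem_piFinset.1 ht i
          rw [Finset.mem_range] at h1
          have h2 := hβk i
          omega
        rw [← Finset.prod_univ_sum (fun _ : Fin n => Finset.range N)
          (fun i s => ζ ^ (s * (t i + (N - α i))))]
        have key : ∀ i : Fin n, ∑ s ∈ Finset.range N, ζ ^ (s * (t i + (N - α i)))
            = if t i = α i then (N : ℂ) else 0 := by
          intro i
          rw [sum_pow_root N (by omega)]
          have hd : N ∣ (t i + (N - α i)) ↔ t i = α i := by
            constructor
            · intro hdvd
              have h1 : α i ≤ k := hαk i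
              have h2 : t i ≤ k := htk i
              have := Nat.eq_of_dvd_of_lt_two_mul (by omega) hdvd (by omega)
              omega
            · intro h
              rw [h]
              have h1 := hαk i
              have : α i + (N - α i) = N := by omega
              rw [this]
          simp [hd]
        rw [Finset.prod_congr rfl fun i _ => key i]
        by_cases h : t = α
        · subst h
          simp
        · obtain ⟨i, hi⟩ := Function.ne_iff.1 h
          rw [if_neg h, Finset.prod_eq_zero (Finset.mem_univ i) (by rw [if_neg hi])]
    _ = ((N : ℕ) : ℂ)^n * (c α * d ^ k) := by
        simp_rw [mul_ite, mul_zero, Finset.sum_ite_eq' _ α]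
        rw [Finset.sum_eq_single α]
        · rw [if_pos (by simp [Fintype.mem_piFinset, Nat.lt_succ_iff])]
          have : A α α = d ^ k := by
            rw [hA]
            simp only [Nat.sub_self, pow_zero, mul_one, Nat.choose_self, Nat.cast_one]
            rw [Finset.prod_pow_eq_pow_sum]
            congr 1
            exact Finset.Nat.mem_antidiagonalTuple.1 hα
          rw [this]
          ring
        · intro β hβ hne
          rw [if_neg]
          intro hmem
          apply hne
          have hle : ∀ i, α i ≤ β i := by
            intro i
            have := Fintype.mem_piFinset.1 hmem i
            rw [Finset.mem_range] at this
            omega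
          have hsum : ∑ i, β i = ∑ i, α i := by
            rw [Finset.Nat.mem_antidiagonalTuple.1 hβ, Finset.Nat.mem_antidiagonalTuple.1 hα]
          funext i
          by_contra hne2
          have hlt : α i < β i := lt_of_le_of_ne (hle i) (Ne.symm hne2)
          have : ∑ i, α i < ∑ i, β i :=
            Finset.sum_lt_sum (fun i _ => hle i) ⟨i, Finset.mem_univ i, hlt⟩
          omega
        · intro h
          exact absurd hα h

lemma summable_half_pow (n : ℕ) :
    Summable (fun α : Fin n → ℕ => ((1:ℝ)/2) ^ (∑ i, α i)) := by
  refine summable_of_sum_le (c := (2:ℝ)^n) (fun α => by positivity) fun u => ?_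
  classical
  set B := (u.sup fun α => ∑ i, α i) + 1 with hB
  have hsub : u ⊆ Fintype.piFinset (fun _ : Fin n => Finset.range B) := by
    intro α hαu
    rw [Fintype.mem_piFinset]
    intro i
    rw [Finset.mem_range]
    have h1 : α i ≤ ∑ i, α i :=
      Finset.single_le_sum (fun _ _ => Nat.zero_le _) (Finset.mem_univ i)
    have h2 := Finset.le_sup (f := fun α : Fin n → ℕ => ∑ i, α i) hαu
    exact Nat.lt_succ_of_le (le_trans h1 h2)
  calc ∑ α ∈ u, ((1:ℝ)/2) ^ (∑ i, α i)
      ≤ ∑ α ∈ Fintype.piFinset (fun _ : Fin n => Finset.range B), ((1:ℝ)/2) ^ (∑ i, α i) :=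
        Finset.sum_le_sum_of_subset_of_nonneg hsub (fun _ _ _ => by positivity)
    _ = ∏ i : Fin n, ∑ s ∈ Finset.range B, ((1:ℝ)/2) ^ s := by
        rw [Finset.prod_univ_sum]
        exact Finset.sum_congr rfl fun α _ => (Finset.prod_pow_eq_pow_sum _ _ _).symm
    _ ≤ ∏ i : Fin n, (2:ℝ) := by
        refine Finset.prod_le_prod (fun _ _ => by positivity) fun i _ => ?_
        exact sum_geometric_two_le B
    _ = (2:ℝ)^n := by simp [Finset.prod_const]

/-- **Hartogs.** Let `F = Σ_α c_α z^α` be a formal power series in `n`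
complex variables. If for every `v ∈ ℂⁿ` the one-variable power series
`Σ_k (Σ_{|α| = k} c_α v^α) λ^k` has positive radius of convergence, then `F` is
convergent: there is `r > 0` with `Σ_α |c_α| r^{|α|} < ∞`. -/
theorem hartogs_formal_power_series
    (n : ℕ) (c : (Fin n → ℕ) → ℂ)
    (hline : ∀ v : Fin n → ℂ, ∃ ρ : ℝ, 0 < ρ ∧
      Summable fun k : ℕ =>
        ‖∑ α ∈ Finset.Nat.antidiagonalTuple n k,
          c α * ∏ i, (v i) ^ (α i)‖ * ρ ^ k) :
    ∃ r : ℝ, 0 < r ∧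
      Summable fun α : Fin n → ℕ => ‖c α‖ * r ^ (∑ i, α i) := by
  classical
  set P : ℕ → (Fin n → ℂ) → ℂ :=
    fun k v => ∑ α ∈ Finset.Nat.antidiagonalTuple n k, c α * ∏ i, v i ^ α i with hP
  have hcont : ∀ k, Continuous (P k) := by
    intro k
    refine continuous_finset_sum _ fun α _ => Continuous.mul continuous_const ?_
    exact continuous_finset_prod _ fun i _ => (continuous_apply i).pow _
  set E : ℕ → Set (Fin n → ℂ) :=
    fun m => {v | ∀ k, ‖P k v‖ ≤ (m+1 : ℝ)^(k+1)} with hE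
  have hclosed : ∀ m, IsClosed (E m) := by
    intro m
    have : E m = ⋂ k, {v | ‖P k v‖ ≤ (m+1 : ℝ)^(k+1)} := by
      ext v; simp [hE, Set.mem_iInter]
    rw [this]
    exact isClosed_iInter fun k =>
      isClosed_le ((hcont k).norm) continuous_const
  have hcover : ⋃ m, E m = Set.univ := by
    rw [Set.eq_univ_iff_forall]
    intro v
    obtain ⟨ρ, hρ, hsum⟩ := hline v
    set C : ℝ := ∑' k, ‖P k v‖ * ρ^k with hC
    have hC0 : 0 ≤ C := tsum_nonneg fun k => by positivity
    obtain ⟨m, hm⟩ := exists_nat_ge (max C (1/ρ))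
    refine Set.mem_iUnion.2 ⟨m, fun k => ?_⟩
    have hterm : ‖P k v‖ * ρ^k ≤ C :=
      hsum.le_tsum k (fun b _ => by positivity)
    have h1 : ‖P k v‖ ≤ C * (1/ρ)^k := by
      rw [one_div, inv_pow, ← div_eq_mul_inv, le_div_iff₀ (pow_pos hρ k)]
      exact hterm
    have hm' : (m:ℝ) ≤ (m:ℝ)+1 := le_add_of_nonneg_right zero_le_one
    have hmC : C ≤ (m:ℝ)+1 := le_trans (le_trans (le_max_left _ _) hm) hm'
    have hmρ : 1/ρ ≤ (m:ℝ)+1 := le_trans (le_trans (le_max_right _ _) hm) hm'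
    calc ‖P k v‖ ≤ C * (1/ρ)^k := h1
      _ ≤ ((m:ℝ)+1) * ((m:ℝ)+1)^k := by
          refine mul_le_mul hmC (pow_le_pow_left₀ (by positivity) hmρ k) (by positivity) (le_trans hC0 hmC)
      _ = ((m:ℝ)+1)^(k+1) := by ring
  obtain ⟨m, v0, hv0⟩ := nonempty_interior_of_iUnion_of_closed hclosed hcover
  obtain ⟨δ, hδ, hball⟩ := Metric.isOpen_iff.1 isOpen_interior v0 hv0
  have hballE : Metric.ball v0 δ ⊆ E m := hball.trans interior_subset
  set M : ℝ := (m:ℝ) + 1 with hM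
  have hM1 : 1 ≤ M := by
    rw [hM]
    have h : (0:ℝ) ≤ (m:ℝ) := Nat.cast_nonneg m
    linarith
  have hM0 : 0 < M := by linarith
  set r0 : ℝ := δ/2 with hr0
  have hr00 : 0 < r0 := by positivity
  -- coefficient bound
  have hbound : ∀ α : Fin n → ℕ, ‖c α‖ * r0 ^ (∑ i, α i) ≤ M ^ ((∑ i, α i) + 1) := by
    intro α
    set k := ∑ i, α i with hk
    set N := k + 1 with hNd
    set ζ := Complex.exp (2 * Real.pi * Complex.I / (N : ℕ)) with hζd
    have hαmem : α ∈ Finset.Nat.antidiagonalTuple n k :=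
      Finset.Nat.mem_antidiagonalTuple.2 hk.symm
    have hid := key_identity n k c α hαmem v0 (r0 : ℂ)
    have hζabs : ‖ζ‖ = 1 := by
      rw [hζd]
      have : 2 * (Real.pi : ℂ) * Complex.I / (N : ℕ) = ((2 * Real.pi / N : ℝ) : ℂ) * Complex.I := by
        push_cast
        ring
      rw [this, Complex.norm_exp_ofReal_mul_I]
    -- each sampled point lies in the ball
    have hpt : ∀ j : Fin n → ℕ, (fun i => v0 i + (r0:ℂ) * ζ ^ (j i)) ∈ Metric.ball v0 δ := by
      intro j
      rw [Metric.mem_ball, dist_pi_lt_iff hδ]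
      intro i
      rw [Complex.dist_eq]
      have : v0 i + (r0:ℂ) * ζ ^ (j i) - v0 i = (r0:ℂ) * ζ ^ (j i) := by ring
      rw [this, norm_mul, norm_pow, hζabs, one_pow, mul_one, Complex.norm_real, Real.norm_eq_abs,
        abs_of_pos hr00]
      rw [hr0]
      linarith
    have habs : (N:ℝ)^n * (‖c α‖ * r0 ^ k) ≤ (N:ℝ)^n * M^(k+1) := by
      have h2 : ‖((N:ℕ):ℂ)^n * (c α * (r0:ℂ) ^ k)‖
          = (N:ℝ)^n * (‖c α‖ * r0 ^ k) := by
        rw [norm_mul, norm_mul, norm_pow, norm_pow, Complex.norm_natCast, Complex.norm_real, Real.norm_eq_abs,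
          abs_of_pos hr00]
      rw [← h2, ← hid]
      calc ‖∑ j ∈ Fintype.piFinset (fun _ : Fin n => Finset.range N), _‖
          ≤ ∑ j ∈ Fintype.piFinset (fun _ : Fin n => Finset.range N),
              ‖(∑ β ∈ Finset.Nat.antidiagonalTuple n k,
                c β * ∏ i, (v0 i + (r0:ℂ) * ζ ^ (j i)) ^ (β i))
                * ∏ i, ζ ^ (j i * (N - α i))‖ := norm_sum_le _ _
        _ ≤ ∑ j ∈ Fintype.piFinset (fun _ : Fin n => Finset.range N), M^(k+1) := by
            refine Finset.sum_le_sum fun j _ => ?_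
            rw [norm_mul]
            have h3 : ‖∏ i, ζ ^ (j i * (N - α i))‖ = 1 := by
              rw [norm_prod]
              refine Finset.prod_eq_one fun i _ => ?_
              rw [norm_pow, hζabs, one_pow]
            rw [h3, mul_one]
            have := hballE (hpt j) k
            exact this
        _ = (N:ℝ)^n * M^(k+1) := by
            rw [Finset.sum_const, Fintype.card_piFinset]
            simp [mul_comm]
    have hNn : (0:ℝ) < (N:ℝ)^n := by positivity
    exact le_of_mul_le_mul_left habs hNn
  -- choose radius
  refine ⟨r0 / (2*M), by positivity, ?_⟩
  have hle : ∀ α : Fin n → ℕ,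
      ‖c α‖ * (r0 / (2*M)) ^ (∑ i, α i) ≤ M * ((1:ℝ)/2) ^ (∑ i, α i) := by
    intro α
    set k := ∑ i, α i with hk
    have h1 : ‖c α‖ * r0 ^ k ≤ M ^ (k + 1) := hbound α
    have h2 : (r0 / (2*M))^k = r0^k * (1/(2*M))^k := by
      rw [← mul_pow]
      congr 1
      field_simp
    calc ‖c α‖ * (r0 / (2*M)) ^ k
        = (‖c α‖ * r0 ^ k) * (1/(2*M))^k := by rw [h2]; ring
      _ ≤ M ^ (k+1) * (1/(2*M))^k := mul_le_mul_of_nonneg_right h1 (by positivity)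
      _ = M * ((1:ℝ)/2) ^ k := by
          have hMk : (M:ℝ)^k ≠ 0 := by positivity
          rw [pow_succ]
          field_simp [mul_pow]
          rw [← mul_pow]
          congr 1
          field_simp
  exact Summable.of_nonneg_of_le (fun α => by positivity) hle
    ((summable_half_pow n).mul_left M)
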